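/- Let (E, L, E) be a set-finite labeled space where the graph E has no sinks (so E = E_reg). Then (E, L, E) is minimal if and only if (E, L, E) is strongly cofinal. -/

import Mathlib

universe u v

variable {V : Type u} {Λ : Type v}

/-- The relative range `r(S, α)` of a set of vertices along a labeled path. -/
def relRange (Edge : V → Λ → V → Prop) : Set V → List Λ → Set V
  | S, [] => S
  | S, a :: α => relRange Edge {w | ∃ u ∈ S, Edge u a w} α

/-- The range `r(α)` of a labeled path. -/
def lrange (Edge : V → Λ → V → Prop) (α : List Λ) : Set V :=
  relRange Edge Set.univ α

/-- `α` is a (nonempty) labeled path of the labeled graph. -/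
def IsLP (Edge : V → Λ → V → Prop) (α : List Λ) : Prop :=
  α ≠ [] ∧ (lrange Edge α).Nonempty

/-- `L(SE¹)`: labels of edges emitted from `S`. -/
def edgeLabels (Edge : V → Λ → V → Prop) (S : Set V) : Set Λ :=
  {a | ∃ u ∈ S, ∃ w, Edge u a w}

/-- `S` is regular: every nonempty `B ∈ ℬ` with `B ⊆ S` emits a finite nonzero set of labels. -/
def RegularSet (Edge : V → Λ → V → Prop) (ℬ : Set (Set V)) (S : Set V) : Prop :=
  ∀ B ∈ ℬ, B ⊆ S → B.Nonempty →
    (edgeLabels Edge B).Finite ∧ (edgeLabels Edge B).Nonempty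

/-- `H ⊆ ℬ` is hereditary. -/
def Hered (Edge : V → Λ → V → Prop) (ℬ H : Set (Set V)) : Prop :=
  H ⊆ ℬ ∧ (∀ A ∈ H, ∀ α : List Λ, IsLP Edge α → relRange Edge A α ∈ H) ∧
    (∀ A ∈ H, ∀ B ∈ H, A ∪ B ∈ H) ∧ (∀ A ∈ H, ∀ B ∈ ℬ, B ⊆ A → B ∈ H)

/-- `H` is saturated. -/
def Satur (Edge : V → Λ → V → Prop) (ℬ H : Set (Set V)) : Prop :=
  ∀ A ∈ ℬ, RegularSet Edge ℬ A →
    (∀ α : List Λ, IsLP Edge α → relRange Edge A α ∈ H) → A ∈ H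

/-- `H(A)`: sets covered by finitely many relative ranges `r(A, αᵢ)`, `αᵢ ∈ L^#(E)`. -/
def HSet (Edge : V → Λ → V → Prop) (ℬ : Set (Set V)) (A : Set V) : Set (Set V) :=
  {B ∈ ℬ | ∃ l : List (List Λ), (∀ α ∈ l, α = [] ∨ IsLP Edge α) ∧
    B ⊆ ⋃ α ∈ l, relRange Edge A α}

/-- `S(H(A))`: the saturation of `H(A)`. -/
def SHSet (Edge : V → Λ → V → Prop) (ℬ : Set (Set V)) (A : Set V) : Set (Set V) :=
  {B ∈ ℬ | ∃ n : ℕ,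
    (∀ β : List Λ, (β = [] ∨ IsLP Edge β) → β.length = n →
      relRange Edge B β ∈ HSet Edge ℬ A) ∧
    (∀ γ : List Λ, (γ = [] ∨ IsLP Edge γ) → γ.length < n →
      ∃ C ∈ HSet Edge ℬ A, ∃ D ∈ ℬ, RegularSet Edge ℬ D ∧ relRange Edge B γ = C ∪ D)}

/-- `ℬ` is an accommodating set for the labeled graph. -/
def Accommodating (Edge : V → Λ → V → Prop) (ℬ : Set (Set V)) : Prop :=
  (∀ α : List Λ, IsLP Edge α → lrange Edge α ∈ ℬ) ∧
    (∀ A ∈ ℬ, ∀ α : List Λ, IsLP Edge α → relRange Edge A α ∈ ℬ) ∧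
    (∀ A ∈ ℬ, ∀ B ∈ ℬ, A ∪ B ∈ ℬ) ∧ (∀ A ∈ ℬ, ∀ B ∈ ℬ, A ∩ B ∈ ℬ)

/-- `ℬ` is non-degenerate: closed under relative complements (and contains `∅`). -/
def NonDegenerate (ℬ : Set (Set V)) : Prop :=
  (∅ : Set V) ∈ ℬ ∧ ∀ A ∈ ℬ, ∀ B ∈ ℬ, A \ B ∈ ℬ

/-- The labeled space is weakly left-resolving. -/
def WLR (Edge : V → Λ → V → Prop) (ℬ : Set (Set V)) : Prop :=
  ∀ A ∈ ℬ, ∀ B ∈ ℬ, ∀ α : List Λ, IsLP Edge α →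
    relRange Edge (A ∩ B) α = relRange Edge A α ∩ relRange Edge B α

/-- `ℬ` is the smallest non-degenerate accommodating set. -/
def SmallestAccom (Edge : V → Λ → V → Prop) (ℬ : Set (Set V)) : Prop :=
  Accommodating Edge ℬ ∧ NonDegenerate ℬ ∧
    ∀ ℬ' : Set (Set V), Accommodating Edge ℬ' → NonDegenerate ℬ' → ℬ ⊆ ℬ'

/-- `x_{[1,n]}`: the length-`n` prefix of an infinite word. -/
def wordPrefix (x : ℕ → Λ) (n : ℕ) : List Λ := List.ofFn fun i : Fin n => x i.val

/-- `x` lies in the closure of `L(E^∞)`: all finite prefixes are labeled paths. -/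
def InfWord (Edge : V → Λ → V → Prop) (x : ℕ → Λ) : Prop :=
  ∀ n : ℕ, 1 ≤ n → IsLP Edge (wordPrefix x n)

/-- Strong cofinality of a labeled space. -/
def StrCofinal (Edge : V → Λ → V → Prop) (ℬ : Set (Set V)) : Prop :=
  ∀ A ∈ ℬ, A.Nonempty → ∀ x : ℕ → Λ, InfWord Edge x →
    ∃ N : ℕ, 1 ≤ N ∧ ∃ l : List (List Λ), (∀ α ∈ l, IsLP Edge α) ∧
      lrange Edge (wordPrefix x N) ⊆ ⋃ α ∈ l, relRange Edge A α

/-- Minimality: the only hereditary saturated subsets of `ℬ` are `{∅}` and `ℬ`. -/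
def MinimalLS (Edge : V → Λ → V → Prop) (ℬ : Set (Set V)) : Prop :=
  ∀ H : Set (Set V), Hered Edge ℬ H → Satur Edge ℬ H → H ⊆ {∅} ∨ H = ℬ

/-- `L(SEⁿ)`: labels of paths of length `n` with source in `S`. -/
def labelsOfLen (Edge : V → Λ → V → Prop) (S : Set V) (n : ℕ) : Set (List Λ) :=
  {β | β.length = n ∧ (relRange Edge S β).Nonempty}

/-- The labeled space is disagreeable. -/
def Disagreeable (Edge : V → Λ → V → Prop) (ℬ : Set (Set V)) : Prop :=
  ∀ A ∈ ℬ, A.Nonempty → ∀ β : List Λ, IsLP Edge β →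
    ∃ n : ℕ, 1 ≤ n ∧ labelsOfLen Edge A (β.length * n) ≠ {(List.replicate n β).flatten}

/-- `(α, A)` is a cycle. -/
def IsCycle (Edge : V → Λ → V → Prop) (ℬ : Set (Set V)) (α : List Λ) (A : Set V) : Prop :=
  IsLP Edge α ∧ A ∈ ℬ ∧ A.Nonempty ∧ ∀ B ∈ ℬ, B ⊆ A → relRange Edge B α = B

/-- The cycle `(α, A)` has an exit. -/
def CycleHasExit (Edge : V → Λ → V → Prop) (ℬ : Set (Set V)) (α : List Λ) (A : Set V) : Prop :=
  ∃ t : ℕ, 1 ≤ t ∧ t ≤ α.length ∧ ∃ B ∈ ℬ, B.Nonempty ∧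
    B ⊆ relRange Edge A (α.take t) ∧
    edgeLabels Edge B ≠ {a : Λ | α[t % α.length]? = some a}

/-- The cycle `(α, A)` has no exits. -/
def CycleNoExit (Edge : V → Λ → V → Prop) (ℬ : Set (Set V)) (α : List Λ) (A : Set V) : Prop :=
  ∀ t : ℕ, 1 ≤ t → t ≤ α.length → ∀ B ∈ ℬ, B.Nonempty →
    B ⊆ relRange Edge A (α.take t) →
    RegularSet Edge ℬ B ∧ edgeLabels Edge B = {a : Λ | α[t % α.length]? = some a}

/-- Condition (L): every cycle has an exit. -/
def CondL (Edge : V → Λ → V → Prop) (ℬ : Set (Set V)) : Prop :=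
  ∀ (α : List Λ) (A : Set V), IsCycle Edge ℬ α A → CycleHasExit Edge ℬ α A

/-- `α` is a loop at `A`. -/
def IsLoop (Edge : V → Λ → V → Prop) (α : List Λ) (A : Set V) : Prop :=
  IsLP Edge α ∧ A ⊆ relRange Edge A α

/-- The loop `(α, A)` has an exit. -/
def LoopHasExit (Edge : V → Λ → V → Prop) (α : List Λ) (A : Set V) : Prop :=
  {β : List Λ | ∃ k : ℕ, 1 ≤ k ∧ k ≤ α.length ∧ β = α.take k} ⊂
      {β : List Λ | 1 ≤ β.length ∧ β.length ≤ α.length ∧ (relRange Edge A β).Nonempty} ∨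
    A ⊂ relRange Edge A α

/-- `β` is an irreducible path: not a repetition of a proper initial path. -/
def IrreduciblePath (β : List Λ) : Prop :=
  ∀ k : ℕ, 1 ≤ k → k < β.length → ∀ m : ℕ, β ≠ (List.replicate m (β.take k)).flatten

/-- The generalized vertex `[v]_l`. -/
def gvClass (Edge : V → Λ → V → Prop) (l : ℕ) (v : V) : Set V :=
  {w | ∀ β : List Λ, 1 ≤ β.length → β.length ≤ l → (v ∈ lrange Edge β ↔ w ∈ lrange Edge β)}

/-- `s(x)`: sources of infinite paths labeled by `x`. -/
def srcInf (Edge : V → Λ → V → Prop) (x : ℕ → Λ) : Set V :=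
  {w | ∃ p : ℕ → V, p 0 = w ∧ ∀ n : ℕ, Edge (p n) (x n) (p (n + 1))}


section Aux
variable {V : Type u} {Λ : Type v} (Edge : V → Λ → V → Prop)

lemma relRange_append (S : Set V) (α β : List Λ) :
    relRange Edge S (α ++ β) = relRange Edge (relRange Edge S α) β := by
  induction α generalizing S with
  | nil => simp [relRange]
  | cons a α ih => simp [relRange, ih]

lemma relRange_mono {S T : Set V} (h : S ⊆ T) (α : List Λ) :
    relRange Edge S α ⊆ relRange Edge T α := by
  induction α generalizing S T with
  | nil => exact h
  | cons a α ih =>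
    simp only [relRange]
    exact ih (fun w ⟨u, hu, he⟩ => ⟨u, h hu, he⟩)

lemma relRange_empty (α : List Λ) : relRange Edge (∅ : Set V) α = ∅ := by
  induction α with
  | nil => rfl
  | cons a α ih => simpa [relRange] using ih

lemma relRange_union (S T : Set V) (α : List Λ) :
    relRange Edge (S ∪ T) α = relRange Edge S α ∪ relRange Edge T α := by
  induction α generalizing S T with
  | nil => rfl
  | cons a α ih =>
    simp only [relRange]
    rw [← ih]
    have h : {w | ∃ u ∈ S ∪ T, Edge u a w} =
        {w | ∃ u ∈ S, Edge u a w} ∪ {w | ∃ u ∈ T, Edge u a w} := by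
      ext w
      constructor
      · rintro ⟨u, hu | hu, he⟩
        · exact Or.inl ⟨u, hu, he⟩
        · exact Or.inr ⟨u, hu, he⟩
      · rintro (⟨u, hu, he⟩ | ⟨u, hu, he⟩)
        · exact ⟨u, Or.inl hu, he⟩
        · exact ⟨u, Or.inr hu, he⟩
    rw [h]

lemma relRange_biUnion {ι : Type w} (l : List ι) (f : ι → Set V) (α : List Λ) :
    relRange Edge (⋃ i ∈ l, f i) α = ⋃ i ∈ l, relRange Edge (f i) α := by
  induction l with
  | nil => simp [relRange_empty]
  | cons i l ih =>
    simp only [List.mem_cons, Set.biUnion_insert, Set.iUnion_iUnion_eq_or_left]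
    rw [relRange_union, ih]

lemma relRange_subset_lrange (S : Set V) (α : List Λ) :
    relRange Edge S α ⊆ lrange Edge α :=
  relRange_mono Edge (Set.subset_univ S) α

lemma nonempty_of_relRange {S : Set V} {α : List Λ}
    (h : (relRange Edge S α).Nonempty) : S.Nonempty := by
  rcases S.eq_empty_or_nonempty with rfl | hS
  · rw [relRange_empty] at h; exact absurd h (by simp)
  · exact hS

lemma isLP_of_relRange_nonempty {S : Set V} {α : List Λ} (hne : α ≠ [])
    (h : (relRange Edge S α).Nonempty) : IsLP Edge α :=
  ⟨hne, h.mono (relRange_subset_lrange Edge S α)⟩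

lemma wordPrefix_add (x : ℕ → Λ) (m n : ℕ) :
    wordPrefix x (m + n) = wordPrefix x m ++ List.ofFn (fun i : Fin n => x (m + i)) := by
  unfold wordPrefix
  rw [List.ofFn_add]
  rfl

lemma wordPrefix_succ (x : ℕ → Λ) (n : ℕ) :
    wordPrefix x (n + 1) = wordPrefix x n ++ [x n] := by
  rw [wordPrefix_add]
  simp

end Aux
section Aux2
variable {V : Type u} {Λ : Type v} (Edge : V → Λ → V → Prop) (ℰ : Set (Set V))

lemma relRange_single (S : Set V) (a : Λ) :
    relRange Edge S [a] = {w | ∃ u ∈ S, Edge u a w} := rfl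

lemma relRange_cons (S : Set V) (a : Λ) (α : List Λ) :
    relRange Edge S (a :: α) = relRange Edge (relRange Edge S [a]) α := rfl

lemma edgeLabels_finite
    (hsetfin : ∀ A ∈ ℰ, ∀ n : ℕ, 1 ≤ n → (labelsOfLen Edge A n).Finite)
    {B : Set V} (hB : B ∈ ℰ) : (edgeLabels Edge B).Finite := by
  have h1 : labelsOfLen Edge B 1 = (fun a => [a]) '' edgeLabels Edge B := by
    ext β
    constructor
    · rintro ⟨hlen, w, hw⟩
      match β, hlen with
      | [a], _ =>
        refine ⟨a, ?_, rfl⟩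
        obtain ⟨u, hu, he⟩ := hw
        exact ⟨u, hu, w, he⟩
    · rintro ⟨a, ⟨u, hu, w, he⟩, rfl⟩
      exact ⟨rfl, w, u, hu, he⟩
  have h2 := hsetfin B hB 1 le_rfl
  rw [h1] at h2
  exact Set.Finite.of_finite_image h2
    (fun a _ b _ h => by injection h)

lemma regular_all
    (hsetfin : ∀ A ∈ ℰ, ∀ n : ℕ, 1 ≤ n → (labelsOfLen Edge A n).Finite)
    (hnosink : ∀ v : V, ∃ a w, Edge v a w) (S : Set V) :
    RegularSet Edge ℰ S := by
  intro B hB _ hne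
  refine ⟨edgeLabels_finite Edge ℰ hsetfin hB, ?_⟩
  obtain ⟨u, hu⟩ := hne
  obtain ⟨a, w, he⟩ := hnosink u
  exact ⟨a, u, hu, w, he⟩

lemma cover_clean (A : Set V) (l : List (List Λ)) :
    ∃ l' : List (List Λ), (∀ α ∈ l', α ∈ l ∧ (relRange Edge A α).Nonempty) ∧
      (⋃ α ∈ l, relRange Edge A α) = ⋃ α ∈ l', relRange Edge A α := by
  induction l with
  | nil => exact ⟨[], by simp, rfl⟩
  | cons α l ih =>
    obtain ⟨l', hl', hcov⟩ := ih
    rcases (relRange Edge A α).eq_empty_or_nonempty with hα | hα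
    · refine ⟨l', fun β hβ => ⟨List.mem_cons_of_mem _ (hl' β hβ).1, (hl' β hβ).2⟩, ?_⟩
      simp only [List.mem_cons, Set.biUnion_insert, Set.iUnion_iUnion_eq_or_left, hα,
        Set.empty_union, hcov]
    · refine ⟨α :: l', ?_, ?_⟩
      · intro β hβ
        rcases List.mem_cons.mp hβ with rfl | hβ
        · exact ⟨List.mem_cons_self, hα⟩
        · exact ⟨List.mem_cons_of_mem _ (hl' β hβ).1, (hl' β hβ).2⟩
      · simp only [List.mem_cons, Set.iUnion_iUnion_eq_or_left, hcov]

lemma mem_HSet_of_cover {A B : Set V} (hB : B ∈ ℰ) (l : List (List Λ))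
    (hcov : B ⊆ ⋃ α ∈ l, relRange Edge A α) : B ∈ HSet Edge ℰ A := by
  obtain ⟨l', hl', hceq⟩ := cover_clean Edge A l
  refine ⟨hB, l', fun α hα => ?_, hceq ▸ hcov⟩
  rcases eq_or_ne α [] with rfl | hne
  · exact Or.inl rfl
  · exact Or.inr (isLP_of_relRange_nonempty Edge hne (hl' α hα).2)

lemma HSet_empty (hemp : (∅ : Set V) ∈ ℰ) (A : Set V) : (∅ : Set V) ∈ HSet Edge ℰ A :=
  mem_HSet_of_cover Edge ℰ hemp [] (by simp)

lemma HSet_subset {A B C : Set V} (hB : B ∈ ℰ) (hsub : B ⊆ C)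
    (hC : C ∈ HSet Edge ℰ A) : B ∈ HSet Edge ℰ A := by
  obtain ⟨_, l, _, hcov⟩ := hC
  exact mem_HSet_of_cover Edge ℰ hB l (hsub.trans hcov)

lemma HSet_union {A B C : Set V} (hBC : B ∪ C ∈ ℰ)
    (hB : B ∈ HSet Edge ℰ A) (hC : C ∈ HSet Edge ℰ A) : B ∪ C ∈ HSet Edge ℰ A := by
  obtain ⟨_, l1, _, hcov1⟩ := hB
  obtain ⟨_, l2, _, hcov2⟩ := hC
  refine mem_HSet_of_cover Edge ℰ hBC (l1 ++ l2) (Set.union_subset ?_ ?_)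
  · exact hcov1.trans (Set.iUnion₂_subset fun α hα =>
      Set.subset_biUnion_of_mem (List.mem_append_left _ hα))
  · exact hcov2.trans (Set.iUnion₂_subset fun α hα =>
      Set.subset_biUnion_of_mem (List.mem_append_right _ hα))

end Aux2
section Aux3
variable {V : Type u} {Λ : Type v} (Edge : V → Λ → V → Prop) (ℰ : Set (Set V))

lemma relRange_mem (hsm : SmallestAccom Edge ℰ) {B : Set V} (hB : B ∈ ℰ)
    {γ : List Λ} (hγ : γ = [] ∨ IsLP Edge γ) : relRange Edge B γ ∈ ℰ := by
  rcases hγ with rfl | hγ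
  · exact hB
  · exact hsm.1.2.1 B hB γ hγ

lemma SW_ge (hsm : SmallestAccom Edge ℰ) {A B : Set V} (hB : B ∈ ℰ) {n : ℕ}
    (hS : ∀ β : List Λ, (β = [] ∨ IsLP Edge β) → β.length = n →
      relRange Edge B β ∈ HSet Edge ℰ A)
    {δ : List Λ} (hδ : δ = [] ∨ IsLP Edge δ) (hlen : n ≤ δ.length) :
    relRange Edge B δ ∈ HSet Edge ℰ A := by
  have hemp : (∅ : Set V) ∈ ℰ := hsm.2.1.1
  have hBδ : relRange Edge B δ ∈ ℰ := relRange_mem Edge ℰ hsm hB hδ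
  have hsplit : relRange Edge B δ =
      relRange Edge (relRange Edge B (δ.take n)) (δ.drop n) := by
    rw [← relRange_append, List.take_append_drop]
  have hlentake : (δ.take n).length = n := by
    rw [List.length_take]
    exact min_eq_left hlen
  rcases (relRange Edge B (δ.take n)).eq_empty_or_nonempty with hte | htne
  · rw [hsplit, hte, relRange_empty]
    exact HSet_empty Edge ℰ hemp A
  · have htake : δ.take n = [] ∨ IsLP Edge (δ.take n) := by
      rcases eq_or_ne (δ.take n) [] with h | h
      · exact Or.inl h
      · exact Or.inr (isLP_of_relRange_nonempty Edge h htne)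
    obtain ⟨_, l, _, hcov⟩ := hS (δ.take n) htake hlentake
    refine mem_HSet_of_cover Edge ℰ hBδ (l.map (· ++ δ.drop n)) ?_
    rw [hsplit]
    intro x hx
    have hx2 := relRange_mono Edge hcov (δ.drop n) hx
    rw [relRange_biUnion] at hx2
    simp only [Set.mem_iUnion, exists_prop] at hx2
    obtain ⟨α, hα, hx3⟩ := hx2
    rw [← relRange_append] at hx3
    exact Set.mem_biUnion (List.mem_map_of_mem hα) hx3

lemma mem_SHSet_iff (hsm : SmallestAccom Edge ℰ)
    (hreg : ∀ S : Set V, RegularSet Edge ℰ S) {A B : Set V} :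
    B ∈ SHSet Edge ℰ A ↔ B ∈ ℰ ∧ ∃ n : ℕ,
      ∀ β : List Λ, (β = [] ∨ IsLP Edge β) → β.length = n →
        relRange Edge B β ∈ HSet Edge ℰ A := by
  constructor
  · rintro ⟨hB, n, h1, _⟩
    exact ⟨hB, n, h1⟩
  · rintro ⟨hB, n, h1⟩
    refine ⟨hB, n, h1, fun γ hγ _ => ?_⟩
    exact ⟨∅, HSet_empty Edge ℰ hsm.2.1.1 A, relRange Edge B γ,
      relRange_mem Edge ℰ hsm hB hγ, hreg _, (Set.empty_union _).symm⟩

lemma SHSet_hered (hsm : SmallestAccom Edge ℰ)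
    (hreg : ∀ S : Set V, RegularSet Edge ℰ S) (A : Set V) :
    Hered Edge ℰ (SHSet Edge ℰ A) := by
  have hemp : (∅ : Set V) ∈ ℰ := hsm.2.1.1
  refine ⟨fun B hB => hB.1, ?_, ?_, ?_⟩
  · -- closed under relRange
    intro B hB α hα
    rw [mem_SHSet_iff Edge ℰ hsm hreg] at hB ⊢
    obtain ⟨hB, n, h1⟩ := hB
    refine ⟨hsm.1.2.1 B hB α hα, n, fun β hβ hβn => ?_⟩
    rw [← relRange_append]
    have hlen : n ≤ (α ++ β).length := by
      rw [List.length_append, hβn]; omega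
    have hne : α ++ β ≠ [] := by
      intro h
      exact hα.1 (List.append_eq_nil_iff.mp h).1
    rcases (relRange Edge B (α ++ β)).eq_empty_or_nonempty with he | hne2
    · rw [he]; exact HSet_empty Edge ℰ hemp A
    · exact SW_ge Edge ℰ hsm hB h1
        (Or.inr (isLP_of_relRange_nonempty Edge hne hne2)) hlen
  · -- closed under union
    intro B hB C hC
    rw [mem_SHSet_iff Edge ℰ hsm hreg] at hB hC ⊢
    obtain ⟨hB, n1, h1⟩ := hB
    obtain ⟨hC, n2, h2⟩ := hC
    have hBC : B ∪ C ∈ ℰ := hsm.1.2.2.1 B hB C hC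
    refine ⟨hBC, max n1 n2, fun β hβ hβn => ?_⟩
    rw [relRange_union]
    have m1 : relRange Edge B β ∈ HSet Edge ℰ A :=
      SW_ge Edge ℰ hsm hB h1 hβ (by omega)
    have m2 : relRange Edge C β ∈ HSet Edge ℰ A :=
      SW_ge Edge ℰ hsm hC h2 hβ (by omega)
    have hm : relRange Edge B β ∪ relRange Edge C β ∈ ℰ :=
      hsm.1.2.2.1 _ (relRange_mem Edge ℰ hsm hB hβ) _ (relRange_mem Edge ℰ hsm hC hβ)
    exact HSet_union Edge ℰ hm m1 m2
  · -- closed under subsets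
    intro B hB C hC hsub
    rw [mem_SHSet_iff Edge ℰ hsm hreg] at hB ⊢
    obtain ⟨hB, n, h1⟩ := hB
    refine ⟨hC, n, fun β hβ hβn => ?_⟩
    exact HSet_subset Edge ℰ (relRange_mem Edge ℰ hsm hC hβ)
      (relRange_mono Edge hsub β) (h1 β hβ hβn)

end Aux3
section Aux4
variable {V : Type u} {Λ : Type v} (Edge : V → Λ → V → Prop) (ℰ : Set (Set V))

lemma SHSet_satur (hsm : SmallestAccom Edge ℰ)
    (hreg : ∀ S : Set V, RegularSet Edge ℰ S) (A : Set V) :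
    Satur Edge ℰ (SHSet Edge ℰ A) := by
  classical
  have hemp : (∅ : Set V) ∈ ℰ := hsm.2.1.1
  intro B hB _ hall
  rcases B.eq_empty_or_nonempty with rfl | hBne
  · rw [mem_SHSet_iff Edge ℰ hsm hreg]
    refine ⟨hB, 0, fun β _ _ => ?_⟩
    rw [relRange_empty]
    exact HSet_empty Edge ℰ hemp A
  have hfin : (edgeLabels Edge B).Finite := (hreg B B hB subset_rfl hBne).1
  have h : ∀ a : Λ, ∃ m : ℕ, a ∈ edgeLabels Edge B →
      ∀ β : List Λ, (β = [] ∨ IsLP Edge β) → β.length = m →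
        relRange Edge (relRange Edge B [a]) β ∈ HSet Edge ℰ A := by
    intro a
    by_cases ha : a ∈ edgeLabels Edge B
    · obtain ⟨u, hu, w, he⟩ := ha
      have hne2 : (relRange Edge B [a]).Nonempty := ⟨w, u, hu, he⟩
      have hLP : IsLP Edge [a] := isLP_of_relRange_nonempty Edge (by simp) hne2
      have hmem := hall [a] hLP
      rw [mem_SHSet_iff Edge ℰ hsm hreg] at hmem
      obtain ⟨_, m, hm⟩ := hmem
      exact ⟨m, fun _ => hm⟩
    · exact ⟨0, fun h => absurd h ha⟩
  choose f hf using h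
  rw [mem_SHSet_iff Edge ℰ hsm hreg]
  refine ⟨hB, hfin.toFinset.sup f + 1, fun β hβ hβn => ?_⟩
  match β, hβn with
  | a :: rest, hβn =>
    rw [relRange_cons]
    rcases (relRange Edge (relRange Edge B [a]) rest).eq_empty_or_nonempty with he | hne3
    · rw [he]; exact HSet_empty Edge ℰ hemp A
    · have hane : (relRange Edge B [a]).Nonempty := nonempty_of_relRange Edge hne3
      have ha : a ∈ edgeLabels Edge B := by
        obtain ⟨w, u, hu, he⟩ := hane
        exact ⟨u, hu, w, he⟩
      have hLPa : IsLP Edge [a] := isLP_of_relRange_nonempty Edge (by simp) hane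
      have hrest : rest = [] ∨ IsLP Edge rest := by
        rcases eq_or_ne rest [] with h | h
        · exact Or.inl h
        · exact Or.inr (isLP_of_relRange_nonempty Edge h hne3)
      have hlen : f a ≤ rest.length := by
        have h1 : f a ≤ hfin.toFinset.sup f :=
          Finset.le_sup (hfin.mem_toFinset.mpr ha)
        have h2 : rest.length = hfin.toFinset.sup f := by
          have := hβn
          simp only [List.length_cons] at this
          omega
        omega
      exact SW_ge Edge ℰ hsm (hsm.1.2.1 B hB [a] hLPa) (hf a ha) hrest hlen

lemma SHSet_self (hsm : SmallestAccom Edge ℰ)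
    (hreg : ∀ S : Set V, RegularSet Edge ℰ S) {A : Set V} (hA : A ∈ ℰ) :
    A ∈ SHSet Edge ℰ A := by
  rw [mem_SHSet_iff Edge ℰ hsm hreg]
  refine ⟨hA, 0, fun β hβ hβ0 => ?_⟩
  have : β = [] := List.length_eq_zero_iff.mp hβ0
  subst this
  refine mem_HSet_of_cover Edge ℰ hA [[]] ?_
  simp [relRange]

end Aux4
/-- for a set-finite labeled space with no sinks, minimality is equivalent
to strong cofinality. -/
theorem minimal_iff_strongly_cofinal (Edge : V → Λ → V → Prop) (ℰ : Set (Set V))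
    (hsm : SmallestAccom Edge ℰ) (hwlr : WLR Edge ℰ)
    (hsetfin : ∀ A ∈ ℰ, ∀ n : ℕ, 1 ≤ n → (labelsOfLen Edge A n).Finite)
    (hnosink : ∀ v : V, ∃ a w, Edge v a w) :
    MinimalLS Edge ℰ ↔ StrCofinal Edge ℰ := by
  classical
  have hreg : ∀ S : Set V, RegularSet Edge ℰ S :=
    regular_all Edge ℰ hsetfin hnosink
  have hemp : (∅ : Set V) ∈ ℰ := hsm.2.1.1
  constructor
  · -- minimal → strongly cofinal
    intro hmin A hA hAne x hx
    rcases hmin (SHSet Edge ℰ A) (SHSet_hered Edge ℰ hsm hreg A)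
        (SHSet_satur Edge ℰ hsm hreg A) with h | h
    · exact absurd (h (SHSet_self Edge ℰ hsm hreg hA))
        (by simpa using hAne.ne_empty)
    · have h1 : IsLP Edge (wordPrefix x 1) := hx 1 le_rfl
      have hB0 : lrange Edge (wordPrefix x 1) ∈ ℰ := hsm.1.1 _ h1
      rw [← h, mem_SHSet_iff Edge ℰ hsm hreg] at hB0
      obtain ⟨_, n, hn⟩ := hB0
      set β := List.ofFn (fun i : Fin n => x (1 + ↑i)) with hβdef
      have hβlen : β.length = n := by simp [hβdef]
      have hpre : wordPrefix x (1 + n) = wordPrefix x 1 ++ β := wordPrefix_add x 1 n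
      have hrel : relRange Edge (lrange Edge (wordPrefix x 1)) β =
          lrange Edge (wordPrefix x (1 + n)) := by
        rw [hpre]
        unfold lrange
        exact (relRange_append Edge Set.univ _ _).symm
      have hprene : (lrange Edge (wordPrefix x (1 + n))).Nonempty :=
        (hx (1 + n) (by omega)).2
      have hβLP : β = [] ∨ IsLP Edge β := by
        rcases Nat.eq_zero_or_pos n with hn0 | hn0
        · left; subst hn0; simp [hβdef]
        · right
          refine isLP_of_relRange_nonempty Edge (S := lrange Edge (wordPrefix x 1))
            ?_ (hrel ▸ hprene)
          intro hc
          rw [hc] at hβlen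
          simp at hβlen
          omega
      have hH := hn β hβLP hβlen
      rw [hrel] at hH
      obtain ⟨_, l, _, hcov⟩ := hH
      refine ⟨n + 2, by omega, ?_⟩
      have hstep : wordPrefix x (n + 2) = wordPrefix x (1 + n) ++ [x (1 + n)] := by
        have h2 := wordPrefix_succ x (1 + n)
        rw [show 1 + n + 1 = n + 2 by omega] at h2
        exact h2
      have hcov2 : lrange Edge (wordPrefix x (n + 2)) ⊆
          ⋃ α ∈ l.map (· ++ [x (1 + n)]), relRange Edge A α := by
        intro w hw
        unfold lrange at hw
        rw [hstep, relRange_append] at hw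
        have hw3 := relRange_mono Edge hcov [x (1 + n)] hw
        rw [relRange_biUnion] at hw3
        simp only [Set.mem_iUnion, exists_prop] at hw3
        obtain ⟨α, hα, hw4⟩ := hw3
        rw [← relRange_append] at hw4
        exact Set.mem_biUnion (List.mem_map_of_mem hα) hw4
      obtain ⟨l', hl', hceq⟩ := cover_clean Edge A (l.map (· ++ [x (1 + n)]))
      refine ⟨l', fun α hα => ?_, hceq ▸ hcov2⟩
      obtain ⟨γ, _, rfl⟩ := List.mem_map.mp (hl' α hα).1
      exact isLP_of_relRange_nonempty Edge (by simp) (hl' _ hα).2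
  · -- strongly cofinal → minimal
    intro hscf H hher hsat
    by_cases hsub : H ⊆ {∅}
    · exact Or.inl hsub
    right
    have hex : ∃ A ∈ H, A ≠ (∅ : Set V) := by
      by_contra hc
      push_neg at hc
      exact hsub fun A hA => hc A hA
    obtain ⟨A, hAH, hAne'⟩ := hex
    have hAne : A.Nonempty := Set.nonempty_iff_ne_empty.mpr hAne'
    have hAℰ : A ∈ ℰ := hher.1 hAH
    have hempH : (∅ : Set V) ∈ H := hher.2.2.2 A hAH ∅ hemp (Set.empty_subset A)
    refine Set.Subset.antisymm hher.1 ?_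
    intro B hB
    by_contra hBH
    -- key: escape one letter at a time
    have key : ∀ C, C ∈ ℰ → C ∉ H → ∃ a : Λ, relRange Edge C [a] ∉ H := by
      intro C hCℰ hCH
      by_contra hc
      push_neg at hc
      refine hCH (hsat C hCℰ (hreg C) fun α hα => ?_)
      match α, hα with
      | a :: rest, hα =>
        rw [relRange_cons]
        rcases eq_or_ne rest [] with rfl | hrne
        · exact hc a
        · rcases (relRange Edge (relRange Edge C [a]) rest).eq_empty_or_nonempty with
            he | hne3
          · rw [he]; exact hempH
          · exact hher.2.1 _ (hc a) rest (isLP_of_relRange_nonempty Edge hrne hne3)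
    have step : ∀ γ : List Λ, relRange Edge B γ ∉ H →
        ∃ a, relRange Edge B (γ ++ [a]) ∉ H := by
      intro γ hγ
      have hγne : (relRange Edge B γ).Nonempty := by
        rcases (relRange Edge B γ).eq_empty_or_nonempty with he | hne
        · rw [he] at hγ; exact absurd hempH hγ
        · exact hne
      have hγLP : γ = [] ∨ IsLP Edge γ := by
        rcases eq_or_ne γ [] with h | h
        · exact Or.inl h
        · exact Or.inr (isLP_of_relRange_nonempty Edge h hγne)
      obtain ⟨a, ha⟩ := key _ (relRange_mem Edge ℰ hsm hB hγLP) hγ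
      exact ⟨a, by rw [relRange_append]; exact ha⟩
    let f : {γ : List Λ // relRange Edge B γ ∉ H} → {γ : List Λ // relRange Edge B γ ∉ H} :=
      fun p => ⟨p.1 ++ [(step p.1 p.2).choose], (step p.1 p.2).choose_spec⟩
    let g : ℕ → {γ : List Λ // relRange Edge B γ ∉ H} :=
      fun n => f^[n] ⟨[], hBH⟩
    let x : ℕ → Λ := fun n => (step (g n).1 (g n).2).choose
    have hgsucc : ∀ n, (g (n + 1)).1 = (g n).1 ++ [x n] := by
      intro n
      show (f^[n + 1] _).1 = _
      rw [Function.iterate_succ_apply']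
    have hgpre : ∀ n, wordPrefix x n = (g n).1 := by
      intro n
      induction n with
      | zero => rfl
      | succ n ih => rw [wordPrefix_succ, ih, hgsucc]
    have hglen : ∀ n, (g n).1.length = n := by
      intro n
      induction n with
      | zero => rfl
      | succ n ih => rw [hgsucc]; simp [ih]
    have hxw : InfWord Edge x := by
      intro n hn1
      rw [hgpre]
      have hne : (relRange Edge B (g n).1).Nonempty := by
        rcases (relRange Edge B (g n).1).eq_empty_or_nonempty with he | hne
        · exact absurd (show (∅ : Set V) ∈ H from hempH) (he ▸ (g n).2)
        · exact hne
      refine isLP_of_relRange_nonempty Edge ?_ hne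
      intro hc
      have := hglen n
      rw [hc] at this
      simp at this
      omega
    obtain ⟨N, hN1, l, hlLP, hcov⟩ := hscf A hAℰ hAne x hxw
    have hUl : ∀ l : List (List Λ), (∀ α ∈ l, IsLP Edge α) →
        (⋃ α ∈ l, relRange Edge A α) ∈ H := by
      intro l
      induction l with
      | nil => intro _; simpa using hempH
      | cons α l ih =>
        intro h
        have h1 : relRange Edge A α ∈ H :=
          hher.2.1 A hAH α (h α List.mem_cons_self)
        have h2 := ih fun β hβ => h β (List.mem_cons_of_mem _ hβ)
        have : (⋃ β ∈ α :: l, relRange Edge A β) =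
            relRange Edge A α ∪ ⋃ β ∈ l, relRange Edge A β := by
          simp [List.mem_cons, Set.iUnion_iUnion_eq_or_left]
        rw [this]
        exact hher.2.2.1 _ h1 _ h2
    have hNLP : IsLP Edge (wordPrefix x N) := hxw N hN1
    have hmem : relRange Edge B (wordPrefix x N) ∈ ℰ :=
      hsm.1.2.1 B hB _ hNLP
    have hsubU : relRange Edge B (wordPrefix x N) ⊆ ⋃ α ∈ l, relRange Edge A α :=
      (relRange_subset_lrange Edge B _).trans hcov
    have : relRange Edge B (wordPrefix x N) ∈ H :=
      hher.2.2.2 _ (hUl l hlLP) _ hmem hsubU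
    rw [hgpre] at this
    exact (g N).2 this
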